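/- arXiv:1505.02744 — 2 statements merged into one kernel-verified Lean document; each statement's English description precedes it below -/
import Mathlib

section
/- Let R = {b₁, …, b_r} be a reasonable set and H_k = {h₁, …, h_k} an admissible set compatible with R, with K = (r+1)k+1. Let D₀ ≥ K be a real number and set W₁ = ∏_{p ≤ K} p² · ∏_{K < p ≤ D₀} p (products over primes). Then there exists an integer ν₀ such that: gcd(ν₀ + h_m, W₁) = 1 for m = 1, …, k; p² ∤ ν₀ + h_m − b_ℓ for every prime p ≤ K and all 1 ≤ ℓ ≤ r, 1 ≤ m ≤ k; and p ∤ ν₀ + h_m − b_ℓ for every prime p with K < p ≤ D₀ and all 1 ≤ ℓ ≤ r, 1 ≤ m ≤ k. -/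
open Finset

/-- A tuple of nonzero integers is *reasonable* if for every prime `p` there is
an integer `v` not divisible by `p` with `b ℓ ≢ v (mod p²)` for all `ℓ`. -/
def Reasonable {r : ℕ} (b : Fin r → ℤ) : Prop :=
  ∀ p : ℕ, p.Prime → ∃ v : ℤ, ¬ (p : ℤ) ∣ v ∧ ∀ ℓ, ¬ ((p : ℤ) ^ 2 ∣ b ℓ - v)

/-- A tuple `0 ≤ h 0 < h 1 < ⋯` of integers is *admissible* if for every prime `p`
some residue class `v (mod p)` avoids all the `h i`. -/
def AdmissibleTuple {k : ℕ} (h : Fin k → ℤ) : Prop :=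
  (∀ i, 0 ≤ h i) ∧ StrictMono h ∧
    ∀ p : ℕ, p.Prime → ∃ v : ℤ, ∀ i, ¬ ((p : ℤ) ∣ h i - v)

/-- The product of the primes `< K`. -/
def primorialLT (K : ℕ) : ℕ := ∏ p ∈ (Finset.range K).filter Nat.Prime, p

/-- An admissible tuple `h` is *compatible* with the reasonable tuple `b` if, with
`K = (r+1)k+1` and `P = ∏_{p < K} p`, one has `P² ∣ h m` for all `m` and
`h i - h j + b ℓ ≠ 0` for all `i, j, ℓ`. -/
def CompatibleWith {r k : ℕ} (b : Fin r → ℤ) (h : Fin k → ℤ) : Prop :=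
  (∀ m, ((primorialLT ((r + 1) * k + 1) : ℤ)) ^ 2 ∣ h m) ∧
    ∀ i j ℓ, h i - h j + b ℓ ≠ 0


/-- Chinese remainder over a finset of pairwise coprime integer moduli. -/
lemma crt_int (s : Finset ℕ) (M a : ℕ → ℤ)
    (hcop : ∀ p ∈ s, ∀ q ∈ s, p ≠ q → IsCoprime (M p) (M q)) :
    ∃ ν : ℤ, ∀ p ∈ s, M p ∣ ν - a p := by
  classical
  induction s using Finset.induction_on with
  | empty => exact ⟨0, by simp⟩
  | @insert q s hq ih =>
    obtain ⟨ν', hν'⟩ := ih (fun p hp q' hq' => hcop p (mem_insert_of_mem hp) q' (mem_insert_of_mem hq'))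
    have hc : IsCoprime (M q) (∏ p ∈ s, M p) :=
      IsCoprime.prod_right fun p hp =>
        hcop q (mem_insert_self _ _) p (mem_insert_of_mem hp) (fun hEq => hq (hEq ▸ hp))
    obtain ⟨u, v, huv⟩ := hc
    refine ⟨a q * v * (∏ p ∈ s, M p) + ν' * u * M q, ?_⟩
    intro p hp
    rcases Finset.mem_insert.mp hp with rfl | hps
    · exact ⟨u * (ν' - a p), by linear_combination a p * huv⟩
    · have h1 : (∏ p' ∈ s, M p') ∣ (a q * v * (∏ p' ∈ s, M p') + ν' * u * M q) - ν' :=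
        ⟨a q * v + ν' * (-v), by linear_combination ν' * huv⟩
      have h2 : M p ∣ (∏ p' ∈ s, M p') := Finset.dvd_prod_of_mem _ hps
      have h3 := dvd_add (h2.trans h1) (hν' p hps)
      convert h3 using 1; rfl; ring

/-- A finset of `ZMod p` of size `< p` misses some residue. -/
lemma exists_not_mem_zmod {p : ℕ} (hp : 0 < p) (B : Finset (ZMod p))
    (hB : B.card < p) : ∃ x : ZMod p, x ∉ B := by
  haveI : NeZero p := ⟨hp.ne'⟩
  by_contra hcon
  push_neg at hcon
  have : B = Finset.univ := Finset.eq_univ_iff_forall.mpr hcon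
  rw [this, Finset.card_univ, ZMod.card] at hB
  omega

lemma zmod_eq_of_dvd {n : ℕ} {x y : ℤ} (hd : (n : ℤ) ∣ x - y) :
    ((x : ZMod n) = (y : ZMod n)) := by
  have : ((x - y : ℤ) : ZMod n) = 0 := (ZMod.intCast_zmod_eq_zero_iff_dvd _ _).mpr hd
  push_cast at this
  linear_combination this

lemma zmod_val_intCast {n : ℕ} [NeZero n] (τ : ZMod n) :
    (((τ.val : ℤ)) : ZMod n) = τ := by
  push_cast
  exact ZMod.natCast_rightInverse τ

lemma coprime_of_prime_not_dvd {p : ℕ} (hp : p.Prime) {x : ℤ} (hx : ¬ (p : ℤ) ∣ x) :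
    IsCoprime x (p : ℤ) := by
  rw [Int.isCoprime_iff_gcd_eq_one]
  have hdr : Int.gcd x (p : ℤ) ∣ p := by
    have := Int.gcd_dvd_right (a := x) (b := (p : ℤ))
    exact_mod_cast this
  rcases (Nat.dvd_prime hp).mp hdr with h1 | h1
  · exact h1
  · exfalso
    apply hx
    have := Int.gcd_dvd_left (a := x) (b := (p : ℤ))
    rwa [h1] at this

/-- Existence of the residue `ν₀`: with `K = (r+1)k+1 ≤ D₀` and
`W₁ = ∏_{p ≤ K} p² ∏_{K < p ≤ D₀} p`, there is an integer `ν₀` with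
`(ν₀ + h m, W₁) = 1` for all `m`, `p² ∤ ν₀ + h m - b ℓ` for all primes `p ≤ K`,
and `p ∤ ν₀ + h m - b ℓ` for all primes `K < p ≤ D₀`. -/
theorem exists_nu0 (r k : ℕ) (b : Fin r → ℤ) (h : Fin k → ℤ)
    (hb : ∀ ℓ, b ℓ ≠ 0) (hR : Reasonable b)
    (hadm : AdmissibleTuple h) (hcomp : CompatibleWith b h)
    (D₀ : ℝ) (hD₀ : ((r + 1) * k + 1 : ℕ) ≤ D₀) :
    ∃ ν₀ : ℤ,
      (∀ m : Fin k,
        IsCoprime (ν₀ + h m)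
          (((∏ p ∈ (Finset.range ((r + 1) * k + 1 + 1)).filter Nat.Prime, p ^ 2) *
            ∏ p ∈ (Finset.range (⌊D₀⌋₊ + 1)).filter
              (fun p => p.Prime ∧ (r + 1) * k + 1 < p), p : ℕ) : ℤ)) ∧
      (∀ p : ℕ, p.Prime → p ≤ (r + 1) * k + 1 →
        ∀ (ℓ : Fin r) (m : Fin k), ¬ ((p : ℤ) ^ 2 ∣ ν₀ + h m - b ℓ)) ∧
      (∀ p : ℕ, p.Prime → (r + 1) * k + 1 < p → (p : ℝ) ≤ D₀ →
        ∀ (ℓ : Fin r) (m : Fin k), ¬ ((p : ℤ) ∣ ν₀ + h m - b ℓ)) := by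
  classical
  set K : ℕ := (r + 1) * k + 1 with hKdef
  have hKfloor : K ≤ ⌊D₀⌋₊ := Nat.le_floor hD₀
  set s : Finset ℕ := (Finset.range (⌊D₀⌋₊ + 1)).filter Nat.Prime with hs
  -- choose a good residue for each prime in `s`
  have key : ∀ p ∈ s, ∃ ap : ℤ,
      (∀ m, ¬ (p:ℤ) ∣ ap + h m) ∧
      (p ≤ K → ∀ (ℓ : Fin r) (m : Fin k), ¬ ((p:ℤ)^2 ∣ ap + h m - b ℓ)) ∧
      (K < p → ∀ (ℓ : Fin r) (m : Fin k), ¬ ((p:ℤ) ∣ ap + h m - b ℓ)) := by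
    intro p hps
    have hp : p.Prime := (Finset.mem_filter.mp hps).2
    haveI : NeZero p := ⟨hp.pos.ne'⟩
    have hPne : (p:ℤ) ≠ 0 := by exact_mod_cast hp.pos.ne'
    rcases lt_trichotomy p K with hlt | heqK | hgt
    · -- small primes p < K: use reasonableness, since p² ∣ h m
      obtain ⟨v, hpv, hv⟩ := hR p hp
      have hpP : p ∣ primorialLT K :=
        Finset.dvd_prod_of_mem _ (Finset.mem_filter.mpr ⟨Finset.mem_range.mpr hlt, hp⟩)
      have hph : ∀ m, (p:ℤ)^2 ∣ h m := fun m =>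
        (pow_dvd_pow_of_dvd (Int.natCast_dvd_natCast.mpr hpP) 2).trans (hcomp.1 m)
      refine ⟨v, ?_, ?_, ?_⟩
      · intro m hd
        apply hpv
        have h1 : (p:ℤ) ∣ h m := (dvd_pow_self (p:ℤ) two_ne_zero).trans (hph m)
        have h2 := dvd_sub hd h1
        simpa using h2
      · intro _ ℓ m hd
        apply hv ℓ
        have h2 : (p:ℤ)^2 ∣ (v + h m - b ℓ) - h m := dvd_sub hd (hph m)
        have h3 : b ℓ - v = -((v + h m - b ℓ) - h m) := by ring
        rw [h3]; exact dvd_neg.mpr h2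
      · intro hgt'; omega
    · -- p = K: use admissibility plus a counting argument mod p
      obtain ⟨v, hv⟩ := hadm.2.2 p hp
      have hcard : (Finset.image
          (fun x : Fin r × Fin k => (((-((h x.2 - b x.1 - v) / (p:ℤ))) : ℤ) : ZMod p))
          Finset.univ).card < p := by
        refine lt_of_le_of_lt Finset.card_image_le ?_
        simp only [Finset.card_univ, Fintype.card_prod, Fintype.card_fin]
        have : (r+1)*k = r*k + k := by ring
        omega
      obtain ⟨τ, hτ⟩ := exists_not_mem_zmod hp.pos _ hcard
      refine ⟨-v + (τ.val : ℤ) * p, ?_, ?_, ?_⟩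
      · intro m hd
        apply hv m
        have h1 : (p:ℤ) ∣ (-v + (τ.val:ℤ)*p + h m) - (τ.val:ℤ)*p :=
          dvd_sub hd ⟨(τ.val:ℤ), mul_comm _ _⟩
        have h3 : h m - v = (-v + (τ.val:ℤ)*p + h m) - (τ.val:ℤ)*p := by ring
        rw [h3]; exact h1
      · intro _ ℓ m hd
        have hd' : (p:ℤ)^2 ∣ (τ.val:ℤ)*p + (h m - b ℓ - v) := by
          have hE : (τ.val:ℤ)*p + (h m - b ℓ - v) = -v + (τ.val:ℤ)*p + h m - b ℓ := by ring
          rw [hE]; exact hd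
        have hpc : (p:ℤ) ∣ (h m - b ℓ - v) := by
          have h1 : (p:ℤ) ∣ (τ.val:ℤ)*p + (h m - b ℓ - v) :=
            (dvd_pow_self (p:ℤ) two_ne_zero).trans hd'
          have h2 := dvd_sub h1 (⟨(τ.val:ℤ), mul_comm _ _⟩ : (p:ℤ) ∣ (τ.val:ℤ)*p)
          simpa using h2
        obtain ⟨d, hcd⟩ := hpc
        have hdiv : (h m - b ℓ - v) / (p:ℤ) = d := by
          rw [hcd]; exact Int.mul_ediv_cancel_left _ hPne
        have hτd : (p:ℤ) ∣ (τ.val:ℤ) + d := by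
          have hE : (p:ℤ) * ((τ.val:ℤ) + d) = (τ.val:ℤ)*p + (h m - b ℓ - v) := by
            rw [hcd]; ring
          rw [pow_two] at hd'
          exact (mul_dvd_mul_iff_left hPne).mp (hE ▸ hd')
        apply hτ
        have hEq : ((τ.val:ℤ) : ZMod p) = ((-d : ℤ) : ZMod p) :=
          zmod_eq_of_dvd (by simpa [sub_neg_eq_add] using hτd)
        have hτeq : τ = (((-((h m - b ℓ - v) / (p:ℤ))) : ℤ) : ZMod p) := by
          rw [← zmod_val_intCast τ, hEq, hdiv]
        rw [hτeq]
        exact Finset.mem_image_of_mem _ (Finset.mem_univ (ℓ, m))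
      · intro hgt'; omega
    · -- large primes K < p: counting argument mod p
      have hcard : ((Finset.image (fun m : Fin k => ((-h m : ℤ) : ZMod p)) Finset.univ) ∪
          (Finset.image (fun x : Fin r × Fin k => ((b x.1 - h x.2 : ℤ) : ZMod p))
            Finset.univ)).card < p := by
        refine lt_of_le_of_lt (Finset.card_union_le _ _) ?_
        have h1 := Finset.card_image_le (s := (Finset.univ : Finset (Fin k)))
          (f := fun m => ((-h m : ℤ) : ZMod p))
        have h2 := Finset.card_image_le (s := (Finset.univ : Finset (Fin r × Fin k)))
          (f := fun x => ((b x.1 - h x.2 : ℤ) : ZMod p))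
        simp only [Finset.card_univ, Fintype.card_prod, Fintype.card_fin] at h1 h2
        have : (r+1)*k = r*k + k := by ring
        omega
      obtain ⟨τ, hτ⟩ := exists_not_mem_zmod hp.pos _ hcard
      refine ⟨(τ.val : ℤ), ?_, ?_, ?_⟩
      · intro m hd
        apply hτ
        have hEq : τ = ((-h m : ℤ) : ZMod p) := by
          rw [← zmod_val_intCast τ]
          exact zmod_eq_of_dvd (by simpa [sub_neg_eq_add] using hd)
        rw [hEq]
        exact Finset.mem_union_left _ (Finset.mem_image_of_mem _ (Finset.mem_univ m))
      · intro hle; omega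
      · intro _ ℓ m hd
        apply hτ
        have hEq : τ = ((b ℓ - h m : ℤ) : ZMod p) := by
          rw [← zmod_val_intCast τ]
          refine zmod_eq_of_dvd ?_
          have hE : (τ.val:ℤ) - (b ℓ - h m) = (τ.val:ℤ) + h m - b ℓ := by ring
          rw [hE]; exact hd
        rw [hEq]
        exact Finset.mem_union_right _ (Finset.mem_image_of_mem _ (Finset.mem_univ (ℓ, m)))
  choose! a ha using key
  have hcop : ∀ p ∈ s, ∀ q ∈ s, p ≠ q →
      IsCoprime ((fun p : ℕ => (p:ℤ) ^ (if p ≤ K then 2 else 1)) p)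
        ((fun p : ℕ => (p:ℤ) ^ (if p ≤ K then 2 else 1)) q) := by
    intro p hp q hq hne
    have hpp : p.Prime := (Finset.mem_filter.mp hp).2
    have hqq : q.Prime := (Finset.mem_filter.mp hq).2
    have hbase : IsCoprime (p:ℤ) (q:ℤ) :=
      Nat.isCoprime_iff_coprime.mpr ((Nat.coprime_primes hpp hqq).mpr hne)
    exact hbase.pow
  obtain ⟨ν₀, hν⟩ := crt_int s (fun p : ℕ => (p:ℤ) ^ (if p ≤ K then 2 else 1)) a hcop
  have hmem_small : ∀ p : ℕ, p.Prime → p ≤ K → p ∈ s := fun p hp hle =>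
    Finset.mem_filter.mpr ⟨Finset.mem_range.mpr (by omega), hp⟩
  have hnd : ∀ p ∈ s, ∀ m, ¬ (p:ℤ) ∣ ν₀ + h m := by
    intro p hps m hd
    apply (ha p hps).1 m
    have h1 : (p:ℤ) ∣ ν₀ - a p :=
      (dvd_pow_self (p:ℤ) (n := if p ≤ K then 2 else 1) (by split <;> omega)).trans (hν p hps)
    have h2 := dvd_sub hd h1
    have hE : (ν₀ + h m) - (ν₀ - a p) = a p + h m := by ring
    rwa [hE] at h2
  refine ⟨ν₀, ?_, ?_, ?_⟩
  · intro m
    rw [Nat.cast_mul, Nat.cast_prod, Nat.cast_prod]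
    refine IsCoprime.mul_right (IsCoprime.prod_right ?_) (IsCoprime.prod_right ?_)
    · intro p hpF
      obtain ⟨hpr, hp⟩ := Finset.mem_filter.mp hpF
      have hple : p ≤ K := by
        have := Finset.mem_range.mp hpr; omega
      have hps : p ∈ s := hmem_small p hp hple
      rw [Nat.cast_pow]
      exact (coprime_of_prime_not_dvd hp (hnd p hps m)).pow_right
    · intro p hpF
      obtain ⟨hpr, hp, hKp⟩ := Finset.mem_filter.mp hpF
      have hps : p ∈ s := Finset.mem_filter.mpr ⟨hpr, hp⟩
      exact coprime_of_prime_not_dvd hp (hnd p hps m)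
  · intro p hp hle ℓ m hd
    have hps := hmem_small p hp hle
    have h1 : (p:ℤ)^2 ∣ ν₀ - a p := by
      have := hν p hps; rwa [if_pos hle] at this
    apply (ha p hps).2.1 hle ℓ m
    have h2 := dvd_sub hd h1
    have hE : (ν₀ + h m - b ℓ) - (ν₀ - a p) = a p + h m - b ℓ := by ring
    rwa [hE] at h2
  · intro p hp hKp hpD ℓ m hd
    have hps : p ∈ s := Finset.mem_filter.mpr
      ⟨Finset.mem_range.mpr (by have := Nat.le_floor hpD; omega), hp⟩
    have h1 : (p:ℤ) ∣ ν₀ - a p := by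
      have := hν p hps; rwa [if_neg (by omega), pow_one] at this
    apply (ha p hps).2.2 hKp ℓ m
    have h2 := dvd_sub hd h1
    have hE : (ν₀ + h m - b ℓ) - (ν₀ - a p) = a p + h m - b ℓ := by ring
    rwa [hE] at h2
end

section
/- There is a positive absolute constant C such that the following holds. Let R = {b₁, …, b_r} be a reasonable set and k a positive integer. Then there exists an admissible set H_k = {h₁, …, h_k} of k integers that is compatible with R and satisfies h_k − h₁ ≤ exp(C k r). -/
open Finset

lemma primorialLT_succ_eq (n : ℕ) : primorialLT (n + 1) = primorial n := rfl

lemma four_k_sq_le (k : ℕ) (hk : 1 ≤ k) : 4 * (k * k) ≤ 16 ^ k := by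
  have h1 : k < 2 ^ k := Nat.lt_two_pow_self (n := k)
  have h2 : k * k ≤ 2 ^ k * 2 ^ k := Nat.mul_le_mul h1.le h1.le
  have h3 : 2 ^ k * 2 ^ k = 4 ^ k := by rw [← mul_pow]; norm_num
  have h4 : 4 * (k * k) ≤ 4 ^ (k + 1) := by
    rw [pow_succ, mul_comm (4 ^ k) 4]
    exact Nat.mul_le_mul_left 4 (by omega)
  calc 4 * (k * k) ≤ 4 ^ (k + 1) := h4
    _ ≤ 4 ^ (2 * k) := Nat.pow_le_pow_right (by norm_num) (by omega)
    _ = 16 ^ k := by rw [pow_mul]; norm_num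

lemma aux_nat_bound (r k : ℕ) (hr : 1 ≤ r) (hk : 1 ≤ k) :
    k * (r * (2 * k + 1) + 1) * (primorialLT ((r + 1) * k + 1)) ^ 2 ≤ 16 ^ (4 * k * r) := by
  have hP : primorialLT ((r + 1) * k + 1) ≤ 4 ^ ((r + 1) * k) := by
    rw [primorialLT_succ_eq]
    exact primorial_le_4_pow _
  have hP2 : (primorialLT ((r + 1) * k + 1)) ^ 2 ≤ 16 ^ ((r + 1) * k) := by
    calc (primorialLT ((r + 1) * k + 1)) ^ 2 ≤ (4 ^ ((r + 1) * k)) ^ 2 :=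
          Nat.pow_le_pow_left hP 2
      _ = 4 ^ ((r + 1) * k * 2) := by rw [← pow_mul]
      _ = 16 ^ ((r + 1) * k) := by
          rw [show (r + 1) * k * 2 = 2 * ((r + 1) * k) by ring, pow_mul]; norm_num
  have e1 : k * r ≤ k * (k * r) := Nat.le_mul_of_pos_left (k * r) hk
  have e2 : k ≤ k * (k * r) :=
    le_trans (Nat.le_mul_of_pos_left k hk)
      (Nat.mul_le_mul_left k (Nat.le_mul_of_pos_right k hr))
  have h1 : k * (r * (2 * k + 1) + 1) ≤ 4 * (k * k) * r := by
    calc k * (r * (2 * k + 1) + 1) = 2 * (k * (k * r)) + k * r + k := by ring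
      _ ≤ 2 * (k * (k * r)) + k * (k * r) + k * (k * r) :=
          add_le_add (add_le_add le_rfl e1) e2
      _ = 4 * (k * k) * r := by ring
  have h2 : 4 * (k * k) * r ≤ 16 ^ k * 16 ^ r := by
    have hr16 : r ≤ 16 ^ r := le_of_lt (lt_of_lt_of_le (Nat.lt_two_pow_self (n := r))
      (Nat.pow_le_pow_left (by norm_num) r))
    exact Nat.mul_le_mul (four_k_sq_le k hk) hr16
  calc k * (r * (2 * k + 1) + 1) * (primorialLT ((r + 1) * k + 1)) ^ 2
      ≤ (16 ^ k * 16 ^ r) * 16 ^ ((r + 1) * k) :=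
        Nat.mul_le_mul (le_trans h1 h2) hP2
    _ = 16 ^ (k + r + (r + 1) * k) := by rw [← pow_add, ← pow_add]
    _ ≤ 16 ^ (4 * k * r) := by
        apply Nat.pow_le_pow_right (by norm_num)
        have hkr : k ≤ k * r := Nat.le_mul_of_pos_right k hr
        have hrk : r ≤ k * r := Nat.le_mul_of_pos_left r hk
        calc k + r + (r + 1) * k = k + k + r + k * r := by ring
          _ ≤ k * r + (k * r) + (k * r) + k * r :=
              add_le_add (add_le_add (add_le_add hkr hkr) hrk) le_rfl
          _ = 4 * k * r := by ring

/-- There is an absolute constant `C > 0` so that for every reasonable tuple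
`b₁, …, b_r` (`r ≥ 1`) and every `k ≥ 1` there is an admissible `k`-tuple
compatible with it whose diameter is at most `exp(C k r)`. -/
theorem exists_compatible_admissible_tuple :
    ∃ C : ℝ, 0 < C ∧
      ∀ (r k : ℕ), 1 ≤ r → 1 ≤ k →
        ∀ b : Fin r → ℤ, (∀ ℓ, b ℓ ≠ 0) → Reasonable b →
          ∃ h : Fin k → ℤ, AdmissibleTuple h ∧ CompatibleWith b h ∧
            ∀ i j : Fin k, ((h i - h j : ℤ) : ℝ) ≤ Real.exp (C * k * r) := by
  classical
  refine ⟨100, by norm_num, ?_⟩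
  intro r k hr hk b hb _hreas
  set K : ℕ := (r + 1) * k + 1 with hK
  set Pn : ℕ := primorialLT K with hPndef
  set P : ℤ := (Pn : ℤ) with hPdef
  have hPn_pos : 0 < Pn := Finset.prod_pos (fun p hp => (Finset.mem_filter.mp hp).2.pos)
  have hPpos : 0 < P := by rw [hPdef]; exact_mod_cast hPn_pos
  have hP2pos : 0 < P ^ 2 := by positivity
  set Q : ℕ := r * (2 * k + 1) with hQdef
  set N : ℤ := (Q : ℤ) + 1 with hNdef
  -- the set of "bad" shifts t
  set Bad : Finset ℤ := (Finset.Icc (1 : ℤ) N).filter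
      (fun t => ∃ ℓ : Fin r, ∃ d ∈ Finset.Icc (-(k : ℤ)) k, t * d * P ^ 2 + b ℓ = 0)
      with hBaddef
  have hcard : Bad.card ≤ Q := by
    set f : ℤ → Fin r × ℤ := fun t =>
      if h : ∃ q : Fin r × ℤ, q.2 ∈ Finset.Icc (-(k : ℤ)) k ∧ t * q.2 * P ^ 2 + b q.1 = 0
      then h.choose else (⟨0, hr⟩, 0) with hfdef
    have hspec : ∀ t ∈ Bad,
        (f t).2 ∈ Finset.Icc (-(k : ℤ)) k ∧ t * (f t).2 * P ^ 2 + b (f t).1 = 0 := by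
      intro t ht
      obtain ⟨ℓ, d, hd, he⟩ := (Finset.mem_filter.mp ht).2
      have hex : ∃ q : Fin r × ℤ, q.2 ∈ Finset.Icc (-(k : ℤ)) k ∧ t * q.2 * P ^ 2 + b q.1 = 0 :=
        ⟨(ℓ, d), hd, he⟩
      rw [hfdef]
      simp only [dif_pos hex]
      exact hex.choose_spec
    have hmaps : ∀ t ∈ Bad, f t ∈ (univ : Finset (Fin r)) ×ˢ Finset.Icc (-(k : ℤ)) k :=
      fun t ht => Finset.mem_product.mpr ⟨Finset.mem_univ _, (hspec t ht).1⟩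
    have hinj : Set.InjOn f Bad := by
      intro t1 ht1 t2 ht2 heq
      obtain ⟨_, e1⟩ := hspec t1 ht1
      obtain ⟨_, e2⟩ := hspec t2 ht2
      rw [heq] at e1
      have hdne : (f t2).2 ≠ 0 := by
        intro h0
        rw [h0] at e2
        simp only [mul_zero, zero_mul, zero_add] at e2
        exact hb _ e2
      have hcancel : t1 * ((f t2).2 * P ^ 2) = t2 * ((f t2).2 * P ^ 2) := by
        linear_combination e1 - e2
      exact mul_right_cancel₀ (mul_ne_zero hdne (ne_of_gt hP2pos)) hcancel
    have hle := Finset.card_le_card_of_injOn f hmaps hinj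
    calc Bad.card ≤ ((univ : Finset (Fin r)) ×ˢ Finset.Icc (-(k : ℤ)) k).card := hle
      _ = Q := by
        rw [Finset.card_product, Finset.card_univ, Fintype.card_fin, Int.card_Icc, hQdef]
        congr 1
        omega
  obtain ⟨t, htmem, htgood⟩ : ∃ t ∈ Finset.Icc (1 : ℤ) N, t ∉ Bad := by
    by_contra hcon
    push_neg at hcon
    have hsub : Finset.Icc (1 : ℤ) N ⊆ Bad := hcon
    have hc := Finset.card_le_card hsub
    rw [Int.card_Icc, hNdef] at hc
    omega
  obtain ⟨ht1, htN⟩ := Finset.mem_Icc.mp htmem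
  have htpos : 0 < t := by linarith
  set h : Fin k → ℤ := fun i => (i.val : ℤ) * (t * P ^ 2) with hhdef
  have htP2pos : 0 < t * P ^ 2 := mul_pos htpos hP2pos
  have hnonneg : ∀ i, 0 ≤ h i := by
    intro i
    simp only [hhdef]
    exact mul_nonneg (Int.natCast_nonneg _) htP2pos.le
  refine ⟨h, ⟨hnonneg, ?_, ?_⟩, ⟨?_, ?_⟩, ?_⟩
  · -- StrictMono
    intro i j hij
    simp only [hhdef]
    have hij' : i.val < j.val := hij
    apply mul_lt_mul_of_pos_right _ htP2pos
    exact_mod_cast hij'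
  · -- prime condition
    intro p hp
    by_cases hpK : p < K
    · refine ⟨1, fun i hdvd => ?_⟩
      have hpP : (p : ℤ) ∣ P := by
        rw [hPdef, hPndef, primorialLT]
        exact_mod_cast Finset.dvd_prod_of_mem _ (Finset.mem_filter.mpr
          ⟨Finset.mem_range.mpr hpK, hp⟩)
      have hpH : (p : ℤ) ∣ h i := by
        refine Dvd.dvd.trans hpP ⟨(i.val : ℤ) * (t * P), ?_⟩
        simp only [hhdef]
        ring
      have hone : (p : ℤ) ∣ 1 := by
        have := dvd_sub hpH hdvd
        simpa using this
      have h1 := Int.le_of_dvd one_pos hone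
      have h2 := hp.two_le
      omega
    · -- p ≥ K > k
      push_neg at hpK
      haveI : Fact p.Prime := ⟨hp⟩
      have hkp : k < p := by
        have h1 : k ≤ (r + 1) * k := Nat.le_mul_of_pos_left k (by omega)
        omega
      have hnotsurj : ¬ Function.Surjective (fun i : Fin k => ((h i : ZMod p))) := by
        intro hs
        have := Fintype.card_le_of_surjective _ hs
        rw [ZMod.card, Fintype.card_fin] at this
        omega
      have hex : ∃ y : ZMod p, ∀ i, ((h i : ZMod p)) ≠ y := by
        by_contra hcon
        push_neg at hcon
        exact hnotsurj fun y => hcon y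
      obtain ⟨y, hy⟩ := hex
      refine ⟨(y.val : ℤ), fun i hdvd => ?_⟩
      have hz : ((h i - (y.val : ℤ) : ℤ) : ZMod p) = 0 :=
        (ZMod.intCast_zmod_eq_zero_iff_dvd _ _).mpr hdvd
      push_cast at hz
      rw [ZMod.natCast_val, ZMod.cast_id] at hz
      exact hy i (by linear_combination hz)
  · -- divisibility
    intro m
    refine ⟨(m.val : ℤ) * t, ?_⟩
    simp only [hhdef, hPdef, hPndef, hK]
    ring
  · -- no relation h i - h j + b ℓ = 0
    intro i j ℓ heq
    apply htgood
    rw [hBaddef, Finset.mem_filter]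
    refine ⟨htmem, ℓ, ((i.val : ℤ) - j.val), ?_, ?_⟩
    · have hi := i.isLt
      have hj := j.isLt
      refine Finset.mem_Icc.mpr ⟨?_, ?_⟩ <;> omega
    · simp only [hhdef] at heq
      linear_combination heq
  · -- the diameter bound
    intro i j
    have hle : h i - h j ≤ (k : ℤ) * N * P ^ 2 := by
      have h1 : h i ≤ (k : ℤ) * (t * P ^ 2) := by
        simp only [hhdef]
        apply mul_le_mul_of_nonneg_right _ htP2pos.le
        exact_mod_cast i.isLt.le
      have h2 : 0 ≤ h j := hnonneg j
      have h3 : (k : ℤ) * (t * P ^ 2) ≤ (k : ℤ) * (N * P ^ 2) := by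
        apply mul_le_mul_of_nonneg_left _ (by positivity)
        exact mul_le_mul_of_nonneg_right htN hP2pos.le
      calc h i - h j ≤ h i := by linarith
        _ ≤ (k : ℤ) * (t * P ^ 2) := h1
        _ ≤ (k : ℤ) * (N * P ^ 2) := h3
        _ = (k : ℤ) * N * P ^ 2 := by ring
    have hnat : (k : ℤ) * N * P ^ 2 = ((k * (Q + 1) * Pn ^ 2 : ℕ) : ℤ) := by
      rw [hNdef, hPdef]; push_cast; ring
    have hbound : (k * (Q + 1) * Pn ^ 2 : ℕ) ≤ 16 ^ (4 * k * r) := by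
      rw [hQdef, hPndef, hK]
      exact aux_nat_bound r k hr hk
    have hexp : ((16 : ℝ)) ^ (4 * k * r) ≤ Real.exp (100 * k * r) := by
      have h16 : (16 : ℝ) ≤ Real.exp 25 := by
        have := Real.add_one_le_exp (25 : ℝ)
        linarith
      calc (16 : ℝ) ^ (4 * k * r) ≤ (Real.exp 25) ^ (4 * k * r) :=
            pow_le_pow_left₀ (by norm_num) h16 _
        _ = Real.exp ((4 * k * r : ℕ) * 25) := by rw [Real.exp_nat_mul]
        _ = Real.exp (100 * k * r) := by
            congr 1
            push_cast
            ring
    calc ((h i - h j : ℤ) : ℝ) ≤ (((k : ℤ) * N * P ^ 2 : ℤ) : ℝ) := by exact_mod_cast hle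
      _ = ((k * (Q + 1) * Pn ^ 2 : ℕ) : ℝ) := by rw [hnat]; norm_cast
      _ ≤ ((16 ^ (4 * k * r) : ℕ) : ℝ) := by exact_mod_cast hbound
      _ = (16 : ℝ) ^ (4 * k * r) := by push_cast; ring
      _ ≤ Real.exp (100 * k * r) := hexp
end
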